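/- Let p ≥ 3 be a prime and let p' be the smallest prime greater than p. Then N_{p'}(2) = (p' - 2) · N_p(2); that is, the number of gaps equal to 2 in the cycle of gaps 𝒢(p'#) is (p' - 2) times the number of gaps equal to 2 in 𝒢(p#). -/
import Mathlib


open Finset

/-- `b` is the next totative of `P` after `a`: `a < b`, `b` is coprime to `P`,
and no integer strictly between `a` and `b` is coprime to `P`. -/
def IsNextTot (P a b : ℕ) : Prop :=
  a < b ∧ Nat.Coprime b P ∧ ∀ x, a < x → x < b → ¬ Nat.Coprime x P

/-- Starting at `r`, the successive totatives of `P` after `r` occur at the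
successive partial sums of the list of gaps `c`. -/
def MatchesGaps (P : ℕ) : ℕ → List ℕ → Prop
  | _, [] => True
  | r, c :: cs => IsNextTot P r (r + c) ∧ MatchesGaps P (r + c) cs

open scoped Classical in
/-- `Ncount p s` : the number of (cyclic) occurrences of the constellation `s`
in the cycle of gaps `𝒢(p#)`.  Since the pattern of coprimality to `p#` is
periodic with period `p#`, this is the number of totatives `r ∈ [1, p#]` of `p#`
at which the gap pattern `s` begins. -/
noncomputable def Ncount (p : ℕ) (s : List ℕ) : ℕ :=
  ((Finset.Icc 1 (primorial p)).filter
    (fun r => Nat.Coprime r (primorial p) ∧ MatchesGaps (primorial p) r s)).card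

open scoped Classical in
/-- `nCount p g j` : the number of (cyclic) occurrences in `𝒢(p#)` of
constellations of length `j` with sum `g` (the driving terms of length `j`
for the gap `g`). -/
noncomputable def nCount (p g j : ℕ) : ℕ :=
  ((Finset.Icc 1 (primorial p)).filter
    (fun r => Nat.Coprime r (primorial p) ∧
      ∃ c : List ℕ, c.length = j ∧ c.sum = g ∧ MatchesGaps (primorial p) r c)).card

open scoped Classical

/-- Auxiliary count over `ZMod N`. -/
noncomputable def Bc (N : ℕ) [NeZero N] : ℕ :=
  (Finset.univ.filter (fun x : ZMod N => IsUnit x ∧ IsUnit (x + 2))).card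

lemma isUnit_prod_iff' {M N : Type*} [Monoid M] [Monoid N] {z : M × N} :
    IsUnit z ↔ IsUnit z.1 ∧ IsUnit z.2 := by
  constructor
  · intro h
    exact ⟨h.map (MonoidHom.fst M N), h.map (MonoidHom.snd M N)⟩
  · rintro ⟨⟨u, hu⟩, ⟨v, hv⟩⟩
    refine ⟨⟨z, (↑u⁻¹, ↑v⁻¹), ?_, ?_⟩, rfl⟩ <;>
      simp [Prod.ext_iff, ← hu, ← hv]

lemma countEq (N : ℕ) [NeZero N] :
    ((Finset.Icc 1 N).filter
      (fun r => Nat.Coprime r N ∧ Nat.Coprime (r + 2) N)).card = Bc N := by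
  have hNpos : 0 < N := Nat.pos_of_ne_zero (NeZero.ne N)
  unfold Bc
  refine Finset.card_bij (fun r _ => ((r : ℕ) : ZMod N)) ?_ ?_ ?_
  · intro r hr
    simp only [Finset.mem_filter, Finset.mem_Icc] at hr
    simp only [Finset.mem_filter, Finset.mem_univ, true_and]
    constructor
    · exact (ZMod.isUnit_iff_coprime r N).mpr hr.2.1
    · have : ((r : ZMod N) + 2) = ((r + 2 : ℕ) : ZMod N) := by push_cast; ring
      rw [this]
      exact (ZMod.isUnit_iff_coprime (r + 2) N).mpr hr.2.2
  · intro a ha b hb hab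
    simp only [Finset.mem_filter, Finset.mem_Icc] at ha hb
    have h := (ZMod.natCast_eq_natCast_iff' a b N).mp hab
    have ha' := ha.1; have hb' := hb.1
    rcases Nat.lt_or_ge a N with h1 | h1
    · rcases Nat.lt_or_ge b N with h2 | h2
      · rwa [Nat.mod_eq_of_lt h1, Nat.mod_eq_of_lt h2] at h
      · have hbN : b = N := le_antisymm hb'.2 h2
        rw [Nat.mod_eq_of_lt h1, hbN, Nat.mod_self] at h
        omega
    · have haN : a = N := le_antisymm ha'.2 h1
      rcases Nat.lt_or_ge b N with h2 | h2
      · rw [haN, Nat.mod_self, Nat.mod_eq_of_lt h2] at h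
        omega
      · have hbN : b = N := le_antisymm hb'.2 h2
        rw [haN, hbN]
  · intro x hx
    simp only [Finset.mem_filter, Finset.mem_univ, true_and] at hx
    have hvlt : x.val < N := ZMod.val_lt x
    set r := if x.val = 0 then N else x.val with hrdef
    have hcast : ((r : ℕ) : ZMod N) = x := by
      rw [hrdef]
      split_ifs with h
      · have hx0 : x = 0 := by rwa [ZMod.val_eq_zero] at h
        simp [hx0]
      · exact ZMod.natCast_rightInverse x
    refine ⟨r, ?_, hcast⟩
    simp only [Finset.mem_filter, Finset.mem_Icc]
    refine ⟨⟨?_, ?_⟩, ?_, ?_⟩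
    · rw [hrdef]; split_ifs with h
      · exact hNpos
      · omega
    · rw [hrdef]; split_ifs with h
      · exact le_refl N
      · exact le_of_lt hvlt
    · rw [← ZMod.isUnit_iff_coprime, hcast]; exact hx.1
    · rw [← ZMod.isUnit_iff_coprime]
      have : ((r + 2 : ℕ) : ZMod N) = x + 2 := by push_cast [hcast]; norm_num
      rw [this]; exact hx.2

lemma Bc_mul (M N : ℕ) [NeZero M] [NeZero N] (h : Nat.Coprime M N) :
    Bc (M * N) = Bc M * Bc N := by
  haveI : NeZero (M * N) := ⟨Nat.mul_ne_zero (NeZero.ne M) (NeZero.ne N)⟩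
  let e := ZMod.chineseRemainder h
  have key : Bc (M * N) =
      (Finset.univ.filter (fun z : ZMod M × ZMod N =>
        (IsUnit z.1 ∧ IsUnit (z.1 + 2)) ∧ (IsUnit z.2 ∧ IsUnit (z.2 + 2)))).card := by
    apply Finset.card_bij (fun x _ => e x)
    · intro x hx
      simp only [Finset.mem_filter, Finset.mem_univ, true_and] at hx ⊢
      have h1 : IsUnit (e x) := hx.1.map e
      have h2 : IsUnit (e x + 2) := by
        have : e (x + 2) = e x + 2 := by rw [map_add, map_ofNat]
        rw [← this]; exact hx.2.map e
      rw [isUnit_prod_iff'] at h1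
      have h2' : IsUnit (e x + 2).1 ∧ IsUnit (e x + 2).2 := isUnit_prod_iff'.mp h2
      exact ⟨⟨h1.1, h2'.1⟩, ⟨h1.2, h2'.2⟩⟩
    · intro a _ b _ hab
      exact e.injective hab
    · intro z hz
      refine ⟨e.symm z, ?_, by simp⟩
      simp only [Finset.mem_filter, Finset.mem_univ, true_and] at hz ⊢
      constructor
      · have : IsUnit z := isUnit_prod_iff'.mpr ⟨hz.1.1, hz.2.1⟩
        have := this.map e.symm
        simpa using this
      · have : IsUnit (z + 2) := by
          rw [isUnit_prod_iff']
          constructor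
          · simpa using hz.1.2
          · simpa using hz.2.2
        have h' := this.map e.symm
        have heq : e.symm (z + 2) = e.symm z + 2 := by rw [map_add, map_ofNat]
        rwa [heq] at h'
  rw [key]
  have : (Finset.univ.filter (fun z : ZMod M × ZMod N =>
      (IsUnit z.1 ∧ IsUnit (z.1 + 2)) ∧ (IsUnit z.2 ∧ IsUnit (z.2 + 2)))) =
      (Finset.univ.filter (fun x : ZMod M => IsUnit x ∧ IsUnit (x + 2))) ×ˢ
      (Finset.univ.filter (fun x : ZMod N => IsUnit x ∧ IsUnit (x + 2))) := by
    ext z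
    simp [Finset.mem_product]
  rw [this, Finset.card_product]
  rfl

lemma Bc_prime (q : ℕ) [NeZero q] (hq : q.Prime) (h2 : 2 < q) : Bc q = q - 2 := by
  haveI : Fact q.Prime := ⟨hq⟩
  have h20 : (2 : ZMod q) ≠ 0 := by
    have : ((2 : ℕ) : ZMod q) ≠ 0 := by
      rw [Ne, ZMod.natCast_eq_zero_iff]
      intro hdvd
      exact absurd (Nat.le_of_dvd (by norm_num) hdvd) (by omega)
    simpa using this
  have hset : (Finset.univ.filter (fun x : ZMod q => IsUnit x ∧ IsUnit (x + 2))) =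
      Finset.univ \ {0, -2} := by
    ext x
    simp only [Finset.mem_filter, Finset.mem_univ, true_and, Finset.mem_sdiff,
      Finset.mem_insert, Finset.mem_singleton, isUnit_iff_ne_zero]
    constructor
    · rintro ⟨h1, h2⟩
      push_neg
      refine ⟨h1, ?_⟩
      intro hx
      apply h2
      rw [hx]; ring
    · intro hx
      push_neg at hx
      refine ⟨hx.1, ?_⟩
      intro hc
      apply hx.2
      have : x = -2 := by linear_combination hc
      exact this
  unfold Bc
  rw [hset, Finset.card_sdiff_of_subset (Finset.subset_univ _)]
  have hcard2 : ({0, -2} : Finset (ZMod q)).card = 2 := by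
    rw [Finset.card_insert_of_notMem, Finset.card_singleton]
    simp only [Finset.mem_singleton]
    intro hcontra
    apply h20
    linear_combination hcontra
  rw [hcard2, Finset.card_univ, ZMod.card]

lemma matchesGaps_two {P r : ℕ} (h2 : 2 ∣ P) (hr : Nat.Coprime r P) :
    MatchesGaps P r [2] ↔ Nat.Coprime (r + 2) P := by
  constructor
  · rintro ⟨hnt, -⟩
    exact hnt.2.1
  · intro hc
    refine ⟨⟨by omega, hc, ?_⟩, trivial⟩
    intro x hx1 hx2
    have hx : x = r + 1 := by omega
    subst hx
    intro hco
    have hrodd : ¬ 2 ∣ r := by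
      intro h2r
      have : 2 ∣ Nat.gcd r P := Nat.dvd_gcd h2r h2
      rw [hr] at this
      omega
    have h2r1 : 2 ∣ r + 1 := by omega
    have : 2 ∣ Nat.gcd (r + 1) P := Nat.dvd_gcd h2r1 h2
    rw [hco] at this
    omega

lemma Ncount_two (p : ℕ) (h2 : 2 ∣ primorial p) :
    Ncount p [2] = ((Finset.Icc 1 (primorial p)).filter
      (fun r => Nat.Coprime r (primorial p) ∧ Nat.Coprime (r + 2) (primorial p))).card := by
  unfold Ncount
  congr 1
  apply Finset.filter_congr
  intro r _
  constructor
  · rintro ⟨h1, hm⟩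
    exact ⟨h1, (matchesGaps_two h2 h1).mp hm⟩
  · rintro ⟨h1, hm⟩
    exact ⟨h1, (matchesGaps_two h2 h1).mpr hm⟩

lemma primorial_next {p p' : ℕ} (hp' : p'.Prime) (hlt : p < p')
    (hmin : ∀ q : ℕ, q.Prime → p < q → p' ≤ q) :
    primorial p' = p' * primorial p := by
  unfold primorial
  have hset : (Finset.range (p' + 1)).filter Nat.Prime =
      insert p' ((Finset.range (p + 1)).filter Nat.Prime) := by
    ext q
    simp only [Finset.mem_filter, Finset.mem_range, Finset.mem_insert, Nat.lt_succ_iff]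
    constructor
    · rintro ⟨hq1, hq2⟩
      rcases eq_or_lt_of_le hq1 with h | h
      · exact Or.inl h
      · right
        refine ⟨?_, hq2⟩
        by_contra hcon
        push_neg at hcon
        exact absurd (hmin q hq2 hcon) (by omega)
    · rintro (h | ⟨hq1, hq2⟩)
      · subst h; exact ⟨le_refl _, hp'⟩
      · exact ⟨by omega, hq2⟩
  rw [show ((Finset.range (p' + 1)).filter (fun q => q.Prime)) =
      (Finset.range (p' + 1)).filter Nat.Prime from rfl, hset,
    Finset.prod_insert (by simp only [Finset.mem_filter, Finset.mem_range]; omega)]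

lemma coprime_primorial {p p' : ℕ} (hp' : p'.Prime) (hlt : p < p') :
    Nat.Coprime p' (primorial p) := by
  rw [hp'.coprime_iff_not_dvd]
  intro hdvd
  unfold primorial at hdvd
  obtain ⟨q, hq, hdq⟩ := hp'.prime.exists_mem_finset_dvd hdvd
  simp only [Finset.mem_filter, Finset.mem_range, Nat.lt_succ_iff] at hq
  have : p' = q := (Nat.prime_dvd_prime_iff_eq hp' hq.2).mp hdq
  omega

lemma two_dvd_primorial {p : ℕ} (h2 : 2 ≤ p) : 2 ∣ primorial p := by
  unfold primorial
  apply Finset.dvd_prod_of_mem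
  simp only [Finset.mem_filter, Finset.mem_range]
  exact ⟨by omega, Nat.prime_two⟩

theorem gap_two_recurrence (p p' : ℕ) (hp : p.Prime) (h3 : 3 ≤ p)
    (hp' : p'.Prime) (hlt : p < p') (hmin : ∀ q : ℕ, q.Prime → p < q → p' ≤ q) :
    Ncount p' [2] = (p' - 2) * Ncount p [2] := by
  haveI : NeZero (primorial p) := ⟨(primorial_pos p).ne'⟩
  haveI : NeZero (primorial p') := ⟨(primorial_pos p').ne'⟩
  haveI : NeZero p' := ⟨hp'.pos.ne'⟩
  have h2p : 2 ∣ primorial p := two_dvd_primorial (by omega)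
  have hQ : primorial p' = p' * primorial p := primorial_next hp' hlt hmin
  have h2p' : 2 ∣ primorial p' := by rw [hQ]; exact h2p.mul_left p'
  have hcop : Nat.Coprime p' (primorial p) := coprime_primorial hp' hlt
  haveI : NeZero (p' * primorial p) := ⟨Nat.mul_ne_zero hp'.pos.ne' (primorial_pos p).ne'⟩
  rw [Ncount_two p' h2p', Ncount_two p h2p, hQ, countEq, countEq,
    Bc_mul p' (primorial p) hcop, Bc_prime p' hp' (by omega)]
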